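/- Let $k$ be a field of characteristic $p$, let $f(Y) = f_n Y^n + O(Y^{n+1})$ with $f_n \neq 0$, $n \geq 1$, let $f'(Y) = g_k Y^k + O(Y^{k+1})$ with $g_k \neq 0$, and let $w(Y) = Y + w_r Y^r + O(Y^{r+1})$ with $w_r \neq 0$ and $r \geq k+1$, $r \geq 2$. Fix $m \in \mathbb{Z}$ over a perfect $k$. Then: (a) $w^{(m)} \circ f = f + w_r^{p^m} f_n^r Y^{nr} + O(Y^{nr+1})$, and (b) $f \circ w = f + w_r g_k Y^{r+k} + O(Y^{r+k+1})$. -/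

import Mathlib

open PowerSeries

/-- Composition (substitution) of formal power series: `(w.comp' v)(Y) = w(v(Y))`,
intended for `v` with zero constant coefficient. -/
noncomputable def PowerSeries.comp' {k : Type*} [CommSemiring k] (w v : PowerSeries k) :
    PowerSeries k :=
  PowerSeries.mk fun n => ∑ i ∈ Finset.range (n + 1), coeff i w * coeff n (v ^ i)

/-- `w.iter n` is the `n`-fold composition iterate `w^{∘n}` of `w`, with `w^{∘0} = Y`. -/
noncomputable def PowerSeries.iter {k : Type*} [CommSemiring k] (w : PowerSeries k) :
    ℕ → PowerSeries k
  | 0 => X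
  | n + 1 => w.comp' (w.iter n)


/-- Apply `x ↦ x^(p^m)` (the `m`-th power of the Frobenius automorphism, `m ∈ ℤ`)
to each coefficient of a power series over a perfect field of characteristic `p`. -/
noncomputable def coeffTwist (k : Type*) [Field k] (p : ℕ) [Fact p.Prime] [CharP k p]
    [PerfectRing k p] (m : ℤ) : PowerSeries k → PowerSeries k :=
  PowerSeries.map (↑(frobeniusEquiv k p ^ m : k ≃+* k) : k →+* k)


lemma coeff_comp'' {k : Type*} [CommSemiring k] (w v : PowerSeries k) (n : ℕ) :
    coeff n (w.comp' v) = ∑ i ∈ Finset.range (n + 1), coeff i w * coeff n (v ^ i) := by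
  rw [PowerSeries.comp', coeff_mk]

section aux
variable {k : Type*} [CommRing k]
variable {k : Type*} [CommRing k]

lemma pow_low' {v : PowerSeries k} {a : ℕ} (hv : ∀ j < a, coeff j v = 0) :
    ∀ i : ℕ, ∀ j < a * i, coeff j (v ^ i) = 0 := by
  intro i
  induction i with
  | zero => intro j hj; simp at hj
  | succ i ih =>
    intro j hj
    rw [pow_succ, coeff_mul]
    apply Finset.sum_eq_zero
    rintro ⟨x, y⟩ hxy
    rw [Finset.HasAntidiagonal.mem_antidiagonal] at hxy
    rw [Nat.mul_succ] at hj
    by_cases hx : x < a * i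
    · rw [ih x hx, zero_mul]
    · rw [hv y (by omega), mul_zero]

lemma pow_lead' {v : PowerSeries k} {a : ℕ} (hv : ∀ j < a, coeff j v = 0) :
    ∀ i : ℕ, coeff (a * i) (v ^ i) = coeff a v ^ i := by
  intro i
  induction i with
  | zero => simp
  | succ i ih =>
    rw [pow_succ, coeff_mul]
    rw [Finset.sum_eq_single (a * i, a)]
    · rw [ih, ← pow_succ]
    · rintro ⟨x, y⟩ hxy hne
      rw [Finset.HasAntidiagonal.mem_antidiagonal] at hxy
      by_cases hx : x < a * i
      · rw [pow_low' hv i x hx, zero_mul]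
      · have hy : y < a := by
          rcases Nat.lt_or_ge x (a * i + 1) with h | h
          · exfalso; apply hne
            have hx' : x = a * i := by omega
            subst hx'
            have : y = a := by rw [Nat.mul_succ] at hxy; omega
            rw [this]
          · rw [Nat.mul_succ] at hxy; omega
        rw [hv y hy, mul_zero]
    · intro h
      exfalso; apply h
      rw [Finset.HasAntidiagonal.mem_antidiagonal, Nat.mul_succ]

lemma pow_coeff_mid {w : PowerSeries k} {r : ℕ} (hw0 : coeff 0 w = 0)
    (hw1 : coeff 1 w = 1) (hwlow : ∀ j, 2 ≤ j → j < r → coeff j w = 0) (hr2 : 2 ≤ r) :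
    ∀ i j : ℕ, i < j → j + 2 < i + 2 * r →
      coeff j (w ^ i) = (i : k) * coeff (j - i + 1) w := by
  have hv : ∀ j < 1, coeff j w = 0 := by
    intro j hj
    have : j = 0 := by omega
    rw [this]; exact hw0
  have hlow : ∀ i j : ℕ, j < i → coeff j (w ^ i) = 0 := by
    intro i j hj; exact pow_low' hv i j (by simpa using hj)
  have hlead : ∀ i : ℕ, coeff i (w ^ i) = 1 := by
    intro i
    have := pow_lead' hv i
    rw [one_mul] at this
    rw [this, hw1, one_pow]
  intro i
  induction i with
  | zero =>
    intro j h1 h2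
    simp only [pow_zero, coeff_one, Nat.cast_zero, zero_mul]
    rw [if_neg (by omega)]
  | succ i ih =>
    intro j h1 h2
    rw [pow_succ, coeff_mul, Finset.Nat.sum_antidiagonal_eq_sum_range_succ
      (fun x y => coeff x (w ^ i) * coeff y w)]
    have hterm : ∀ x ∈ Finset.range (j + 1),
        coeff x (w ^ i) * coeff (j - x) w =
          (if x = j - 1 then (i : k) * coeff (j - i) w else 0) +
          (if x = i then coeff (j - i) w else 0) := by
      intro x hx
      rw [Finset.mem_range] at hx
      by_cases hx1 : x = j - 1
      · subst hx1
        rw [if_pos rfl, if_neg (by omega)]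
        have h3 : j - 1 - i + 1 = j - i := by omega
        rw [ih (j - 1) (by omega) (by omega), h3]
        have h4 : j - (j - 1) = 1 := by omega
        rw [h4, hw1, mul_one, add_zero]
      · by_cases hx2 : x = i
        · subst hx2
          rw [if_neg hx1, if_pos rfl, hlead, one_mul, zero_add]
        · rw [if_neg hx1, if_neg hx2, add_zero]
          by_cases hx3 : x < i
          · rw [hlow i x hx3, zero_mul]
          · -- x > i
            by_cases hx4 : x = j
            · have : j - x = 0 := by omega
              rw [this, hw0, mul_zero]
            · -- i < x ≤ j - 2, so j - x ≥ 2
              by_cases hx5 : j - x < r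
              · rw [hwlow (j - x) (by omega) hx5, mul_zero]
              · -- j - x ≥ r, use ih on x
                rw [ih x (by omega) (by omega)]
                rw [hwlow (x - i + 1) (by omega) (by omega), mul_zero, zero_mul]
    rw [Finset.sum_congr rfl hterm, Finset.sum_add_distrib,
      Finset.sum_ite_eq' (Finset.range (j + 1)) (j - 1)
        (fun _ => (i : k) * coeff (j - i) w),
      Finset.sum_ite_eq' (Finset.range (j + 1)) i (fun _ => coeff (j - i) w),
      if_pos (by simp), if_pos (by simp; omega)]
    have h5 : j - (i + 1) + 1 = j - i := by omega
    rw [h5]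
    push_cast
    ring
end aux

/-- leading-term computations for `w^(m) ∘ f - f` and `f ∘ w - f`. -/
theorem leading_terms {p : ℕ} [Fact p.Prime] {k : Type*} [Field k] [CharP k p]
    [PerfectRing k p] (m : ℤ) (f w : PowerSeries k) (n k0 r : ℕ)
    (hn : 1 ≤ n) (hflow : ∀ j < n, coeff j f = 0) (hfn : coeff n f ≠ 0)
    (hglow : ∀ j < k0, coeff j f.derivativeFun = 0)
    (hgk : coeff k0 f.derivativeFun ≠ 0)
    (hw0 : constantCoeff w = 0) (hw1 : coeff 1 w = 1)
    (hwlow : ∀ j, 2 ≤ j → j < r → coeff j w = 0) (hwr : coeff r w ≠ 0)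
    (hrk : k0 + 1 ≤ r) (hr2 : 2 ≤ r) :
    ((∀ j < n * r, coeff j ((coeffTwist k p m w).comp' f - f) = 0) ∧
      coeff (n * r) ((coeffTwist k p m w).comp' f - f) =
        (frobeniusEquiv k p ^ m : k ≃+* k) (coeff r w) * coeff n f ^ r) ∧
    ((∀ j < r + k0, coeff j (f.comp' w - f) = 0) ∧
      coeff (r + k0) (f.comp' w - f) = coeff r w * coeff k0 f.derivativeFun) := by
  have hw0' : coeff 0 w = 0 := by rw [coeff_zero_eq_constantCoeff]; exact hw0
  set φ : k →+* k := (↑(frobeniusEquiv k p ^ m : k ≃+* k) : k →+* k) with hφ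
  have hcW : ∀ j : ℕ, coeff j (coeffTwist k p m w) = φ (coeff j w) := by
    intro j; rw [coeffTwist, coeff_map]
  have hv1 : ∀ j < 1, coeff j w = 0 := by
    intro j hj
    have : j = 0 := by omega
    rw [this]; exact hw0'
  have hlow1 : ∀ i j : ℕ, j < i → coeff j (w ^ i) = 0 := by
    intro i j hj; exact pow_low' hv1 i j (by simpa using hj)
  have hlead1 : ∀ i : ℕ, coeff i (w ^ i) = 1 := by
    intro i
    have := pow_lead' hv1 i
    rw [one_mul] at this
    rw [this, hw1, one_pow]
  constructor
  · -- part (a)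
    constructor
    · intro j hj
      rw [map_sub, coeff_comp'']
      have hterm : ∀ i ∈ Finset.range (j + 1),
          coeff i (coeffTwist k p m w) * coeff j (f ^ i) =
            if i = 1 then coeff j f else 0 := by
        intro i hi
        by_cases h1 : i = 1
        · subst h1; rw [if_pos rfl, hcW, hw1, map_one, one_mul, pow_one]
        · rw [if_neg h1]
          by_cases h0 : i = 0
          · subst h0; rw [hcW, hw0', map_zero, zero_mul]
          · by_cases h2 : i < r
            · rw [hcW, hwlow i (by omega) h2, map_zero, zero_mul]
            · rw [pow_low' hflow i j
                (lt_of_lt_of_le hj (Nat.mul_le_mul_left n (by omega))), mul_zero]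
      rw [Finset.sum_congr rfl hterm,
        Finset.sum_ite_eq' (Finset.range (j + 1)) 1 (fun _ => coeff j f)]
      by_cases hj0 : j = 0
      · subst hj0
        simp [hflow 0 hn]
      · rw [if_pos (by simp only [Finset.mem_range]; omega), sub_self]
    · rw [map_sub, coeff_comp'']
      have hterm : ∀ i ∈ Finset.range (n * r + 1),
          coeff i (coeffTwist k p m w) * coeff (n * r) (f ^ i) =
            (if i = 1 then coeff (n * r) f else 0) +
            (if i = r then φ (coeff r w) * coeff n f ^ r else 0) := by
        intro i hi
        by_cases h1 : i = 1
        · subst h1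
          rw [if_pos rfl, if_neg (by omega), add_zero, hcW, hw1, map_one, one_mul, pow_one]
        · rw [if_neg h1]
          by_cases hr : i = r
          · subst hr
            rw [if_pos rfl, zero_add, hcW, pow_lead' hflow i]
          · rw [if_neg hr, add_zero]
            by_cases h0 : i = 0
            · subst h0; rw [hcW, hw0', map_zero, zero_mul]
            · by_cases h2 : i < r
              · rw [hcW, hwlow i (by omega) h2, map_zero, zero_mul]
              · rw [pow_low' hflow i (n * r)
                  (by
                    have h3 : r + 1 ≤ i := by omega
                    nlinarith), mul_zero]
      rw [Finset.sum_congr rfl hterm, Finset.sum_add_distrib,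
        Finset.sum_ite_eq' (Finset.range (n * r + 1)) 1 (fun _ => coeff (n * r) f),
        Finset.sum_ite_eq' (Finset.range (n * r + 1)) r
          (fun _ => φ (coeff r w) * coeff n f ^ r),
        if_pos (by simp only [Finset.mem_range]; nlinarith),
        if_pos (by simp only [Finset.mem_range]; nlinarith)]
      simp only [hφ, RingEquiv.coe_toRingHom]
      ring
  · -- part (b)
    have hB : ∀ i j : ℕ, i < j → j ≤ r + k0 →
        coeff j (w ^ i) = (i : k) * coeff (j - i + 1) w := by
      intro i j h1 h2
      by_cases h0 : i = 0
      · subst h0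
        rw [pow_zero, coeff_one, if_neg (by omega), Nat.cast_zero, zero_mul]
      · by_cases hone : i = 1
        · subst hone
          have h3 : j - 1 + 1 = j := by omega
          rw [pow_one, Nat.cast_one, one_mul, h3]
        · exact pow_coeff_mid hw0' hw1 hwlow hr2 i j h1 (by omega)
    have hkey : ∀ i j : ℕ, 1 ≤ i → i ≤ k0 → coeff i f * (i : k) = 0 := by
      intro i j h1 h2
      obtain ⟨i', rfl⟩ : ∃ i', i = i' + 1 := ⟨i - 1, by omega⟩
      have := hglow i' (by omega)
      erw [coeff_derivative] at this
      push_cast at this ⊢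
      exact this
    constructor
    · intro j hj
      rw [map_sub, coeff_comp'']
      have hterm : ∀ i ∈ Finset.range (j + 1),
          coeff i f * coeff j (w ^ i) = if i = j then coeff j f else 0 := by
        intro i hi
        rw [Finset.mem_range] at hi
        by_cases hij : i = j
        · subst hij; rw [if_pos rfl, hlead1, mul_one]
        · rw [if_neg hij]
          have hij' : i < j := by omega
          rw [hB i j hij' (by omega)]
          by_cases ht : j - i + 1 < r
          · rw [hwlow (j - i + 1) (by omega) ht, mul_zero, mul_zero]
          · -- j - i + 1 ≥ r, so i ≤ j + 1 - r ≤ k0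
            by_cases h0 : i = 0
            · subst h0; rw [Nat.cast_zero, zero_mul, mul_zero]
            · rw [← mul_assoc, hkey i j (by omega) (by omega), zero_mul]
      rw [Finset.sum_congr rfl hterm,
        Finset.sum_ite_eq' (Finset.range (j + 1)) j (fun _ => coeff j f),
        if_pos (by simp), sub_self]
    · rw [map_sub, coeff_comp'']
      have hterm : ∀ i ∈ Finset.range (r + k0 + 1),
          coeff i f * coeff (r + k0) (w ^ i) =
            (if i = r + k0 then coeff (r + k0) f else 0) +
            (if i = k0 + 1 then coeff r w * coeff k0 f.derivativeFun else 0) := by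
        intro i hi
        rw [Finset.mem_range] at hi
        by_cases hij : i = r + k0
        · subst hij
          rw [if_pos rfl, if_neg (by omega), add_zero, hlead1, mul_one]
        · rw [if_neg hij]
          have hij' : i < r + k0 := by omega
          rw [hB i (r + k0) hij' (by omega)]
          by_cases hk1 : i = k0 + 1
          · subst hk1
            rw [if_pos rfl, zero_add]
            have ht : r + k0 - (k0 + 1) + 1 = r := by omega
            erw [ht, coeff_derivative]
            push_cast
            ring
          · rw [if_neg hk1, add_zero]
            by_cases ht : r + k0 - i + 1 < r
            · rw [hwlow (r + k0 - i + 1) (by omega) ht, mul_zero, mul_zero]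
            · by_cases h0 : i = 0
              · subst h0; rw [Nat.cast_zero, zero_mul, mul_zero]
              · rw [← mul_assoc, hkey i 0 (by omega) (by omega), zero_mul]
      rw [Finset.sum_congr rfl hterm, Finset.sum_add_distrib,
        Finset.sum_ite_eq' (Finset.range (r + k0 + 1)) (r + k0)
          (fun _ => coeff (r + k0) f),
        Finset.sum_ite_eq' (Finset.range (r + k0 + 1)) (k0 + 1)
          (fun _ => coeff r w * coeff k0 f.derivativeFun),
        if_pos (by simp only [Finset.mem_range]; omega),
        if_pos (by simp only [Finset.mem_range]; omega)]
      ring
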